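/- Let 0 < x̄₁, x̄₂ satisfy x̄₁ = g(x̄₂)f(x̄₁) and x̄₂ = ((g(x̄₁)+g(x̄₂))/2)·f(x̄₂) (a stationary state of the three-cell problem with two equal coordinates). Suppose γ is differentiable at x̄₂ with γ(x̄₂) = x̄₁ and γ(y)/f(γ(y)) = g(y) for all y in a neighbourhood of x̄₂, and Γ is differentiable at x̄₁ with Γ(x̄₁) = x̄₂ and Γ(x)/f(Γ(x)) − g(Γ(x))/2 = g(x)/2 for all x in a neighbourhood of x̄₁. Then, writing f₁ = f(x̄₁), f₂ = f(x̄₂), f′₁ = f′(x̄₁), f′₂ = f′(x̄₂), g₁ = g(x̄₁), g₂ = g(x̄₂), g′₁ = g′(x̄₁), g′₂ = g′(x̄₂), the derivative of γ∘Γ at x̄₁ equals [g′₁f₂ / (2 − (f′₂g₂ + f₂g′₂) − g₁f′₂)] · [f₁g′₂ / (1 − f′₁g₂)]. In particular, the boundary for existence of non-homogeneous stationary solutions, where γ∘Γ has a double fixed point, is given by this product equalling 1. -/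

import Mathlib

/-- The Hill-type function `f(x) = 1/(a + x^k)` of the reduced Hes1–Notch model. -/
noncomputable def fHill (a : ℝ) (k : ℕ) : ℝ → ℝ := fun x => 1 / (a + x ^ k)

/-- The Hill-type function `g(x) = 1/(1 + b·x^h)` of the reduced Hes1–Notch model. -/
noncomputable def gHill (b : ℝ) (h : ℕ) : ℝ → ℝ := fun x => 1 / (1 + b * x ^ h)

lemma gHill_hasDerivAt (b : ℝ) (h : ℕ) (x : ℝ) (hx : 1 + b * x ^ h ≠ 0) :
    HasDerivAt (gHill b h) (-(b * (h * x ^ (h-1))) / (1 + b * x ^ h) ^ 2) x := by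
  have h1 : HasDerivAt (fun x : ℝ => 1 + b * x ^ h) (b * (h * x ^ (h-1))) x :=
    ((hasDerivAt_pow h x).const_mul b).const_add 1
  have hg : gHill b h = fun x => (1 + b * x ^ h)⁻¹ := funext fun x => one_div _
  rw [hg]; exact h1.inv hx

lemma fHill_hasDerivAt (a : ℝ) (k : ℕ) (x : ℝ) (hx : a + x ^ k ≠ 0) :
    HasDerivAt (fHill a k) (-(k * x ^ (k-1)) / (a + x ^ k) ^ 2) x := by
  have h1 : HasDerivAt (fun x : ℝ => a + x ^ k) ((k : ℝ) * x ^ (k-1)) x :=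
    (hasDerivAt_pow k x).const_add a
  have hf : fHill a k = fun x => (a + x ^ k)⁻¹ := funext fun x => one_div _
  rw [hf]; exact h1.inv hx

/-- At a stationary state `(x̄₁, x̄₂)` of the three-cell problem (with two equal
coordinates), with `γ` and `Γ` the implicit stationary-response maps determined by
`γ(y)/f(γ(y)) = g(y)` and `Γ(x)/f(Γ(x)) − g(Γ(x))/2 = g(x)/2`, the derivative of `γ∘Γ`
at `x̄₁` equals `[g′₁f₂/(2 − (f′₂g₂ + f₂g′₂) − g₁f′₂)]·[f₁g′₂/(1 − f′₁g₂)]`; the boundary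
for existence of non-homogeneous stationary solutions (a double fixed point of `γ∘Γ`) is
given by this product equalling `1`. -/
theorem threeCell_gamma_comp_deriv
    (a b : ℝ) (ha : 0 < a) (hb : 0 < b) (k h : ℕ) (hk : 1 ≤ k) (hh : 1 ≤ h)
    (x1 x2 : ℝ) (hx1 : 0 < x1) (hx2 : 0 < x2)
    (hrel1 : x1 = gHill b h x2 * fHill a k x1)
    (hrel2 : x2 = (gHill b h x1 + gHill b h x2) / 2 * fHill a k x2)
    (γ Γ : ℝ → ℝ)
    (hγdiff : DifferentiableAt ℝ γ x2) (hγval : γ x2 = x1)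
    (hγ : ∀ᶠ y in nhds x2, γ y / fHill a k (γ y) = gHill b h y)
    (hΓdiff : DifferentiableAt ℝ Γ x1) (hΓval : Γ x1 = x2)
    (hΓ : ∀ᶠ x in nhds x1, Γ x / fHill a k (Γ x) - gHill b h (Γ x) / 2 = gHill b h x / 2) :
    deriv (γ ∘ Γ) x1 =
      deriv (gHill b h) x1 * fHill a k x2 /
          (2 - (deriv (fHill a k) x2 * gHill b h x2 + fHill a k x2 * deriv (gHill b h) x2)
            - gHill b h x1 * deriv (fHill a k) x2) *
        (fHill a k x1 * deriv (gHill b h) x2 / (1 - deriv (fHill a k) x1 * gHill b h x2)) := by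
  have hA1 : (0:ℝ) < a + x1 ^ k := by positivity
  have hA2 : (0:ℝ) < a + x2 ^ k := by positivity
  have hB1 : (0:ℝ) < 1 + b * x1 ^ h := by positivity
  have hB2 : (0:ℝ) < 1 + b * x2 ^ h := by positivity
  have hC1 : (0:ℝ) < a + x1 ^ k + k * x1 ^ k := by positivity
  have hC2 : (0:ℝ) < a + x2 ^ k + k * x2 ^ k := by positivity
  have hx1pow : x1 * x1 ^ (k-1) = x1 ^ k := by
    rw [mul_comm, ← pow_succ, Nat.sub_add_cancel hk]
  have hx2pow : x2 * x2 ^ (k-1) = x2 ^ k := by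
    rw [mul_comm, ← pow_succ, Nat.sub_add_cancel hk]
  have hhpos : (0:ℝ) < h := by exact_mod_cast hh
  have hd2neg : -(b * (h * x2 ^ (h-1))) / (1 + b * x2 ^ h) ^ 2 < 0 := by
    apply div_neg_of_neg_of_pos
    · have : (0:ℝ) < b * (h * x2 ^ (h-1)) := by positivity
      linarith
    · positivity
  have h2C2 : (0:ℝ) < 2 * (a + x2 ^ k + k * x2 ^ k) - -(b * (h * x2 ^ (h-1))) / (1 + b * x2 ^ h) ^ 2 := by
    nlinarith
  -- γ implicit derivative
  have hγd := hγdiff.hasDerivAt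
  have hmulγ : HasDerivAt (fun y => γ y * (a + γ y ^ k))
      (deriv γ x2 * (a + x1 ^ k) + x1 * ((k : ℝ) * x1 ^ (k-1) * deriv γ x2)) x2 := by
    have hpow : HasDerivAt (fun y => a + γ y ^ k) ((k : ℝ) * (γ x2) ^ (k-1) * deriv γ x2) x2 :=
      (hγd.pow k).const_add a
    have := hγd.mul hpow
    rw [hγval] at this
    exact this
  have heqγ : (fun y => γ y * (a + γ y ^ k)) =ᶠ[nhds x2] gHill b h := by
    filter_upwards [hγ] with y hy
    rw [← hy]
    simp only [fHill]
    rw [one_div, div_inv_eq_mul]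
  have hEq1 : -(b * (h * x2 ^ (h-1))) / (1 + b * x2 ^ h) ^ 2
      = deriv γ x2 * (a + x1 ^ k) + x1 * ((k : ℝ) * x1 ^ (k-1) * deriv γ x2) :=
    (gHill_hasDerivAt b h x2 hB2.ne').unique (hmulγ.congr_of_eventuallyEq heqγ.symm)
  have hγ' : deriv γ x2 = (-(b * (h * x2 ^ (h-1))) / (1 + b * x2 ^ h) ^ 2)
      / (a + x1 ^ k + k * x1 ^ k) := by
    rw [eq_div_iff hC1.ne']
    linear_combination hEq1.symm - ((k : ℝ) * deriv γ x2) * hx1pow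
  -- Γ implicit derivative
  have hΓd := hΓdiff.hasDerivAt
  have hg2atΓ : HasDerivAt (gHill b h) (-(b * (h * x2 ^ (h-1))) / (1 + b * x2 ^ h) ^ 2) (Γ x1) := by
    rw [hΓval]; exact gHill_hasDerivAt b h x2 hB2.ne'
  have hgcomp : HasDerivAt (fun x => gHill b h (Γ x))
      ((-(b * (h * x2 ^ (h-1))) / (1 + b * x2 ^ h) ^ 2) * deriv Γ x1) x1 :=
    hg2atΓ.comp x1 hΓd
  have hmulΓ : HasDerivAt (fun x => Γ x * (a + Γ x ^ k) - gHill b h (Γ x) / 2)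
      (deriv Γ x1 * (a + x2 ^ k) + x2 * ((k : ℝ) * x2 ^ (k-1) * deriv Γ x1)
        - ((-(b * (h * x2 ^ (h-1))) / (1 + b * x2 ^ h) ^ 2) * deriv Γ x1) / 2) x1 := by
    have hpow : HasDerivAt (fun x => a + Γ x ^ k) ((k : ℝ) * (Γ x1) ^ (k-1) * deriv Γ x1) x1 :=
      (hΓd.pow k).const_add a
    have := (hΓd.mul hpow).sub (hgcomp.div_const 2)
    rw [hΓval] at this
    exact this
  have heqΓ : (fun x => Γ x * (a + Γ x ^ k) - gHill b h (Γ x) / 2)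
      =ᶠ[nhds x1] (fun x => gHill b h x / 2) := by
    filter_upwards [hΓ] with y hy
    rw [← hy]
    simp only [fHill]
    rw [one_div, div_inv_eq_mul]
  have hEq2 : -(b * (h * x1 ^ (h-1))) / (1 + b * x1 ^ h) ^ 2 / 2
      = deriv Γ x1 * (a + x2 ^ k) + x2 * ((k : ℝ) * x2 ^ (k-1) * deriv Γ x1)
        - ((-(b * (h * x2 ^ (h-1))) / (1 + b * x2 ^ h) ^ 2) * deriv Γ x1) / 2 :=
    ((gHill_hasDerivAt b h x1 hB1.ne').div_const 2).unique
      (hmulΓ.congr_of_eventuallyEq heqΓ.symm)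
  have hΓ' : deriv Γ x1 = (-(b * (h * x1 ^ (h-1))) / (1 + b * x1 ^ h) ^ 2)
      / (2 * (a + x2 ^ k + k * x2 ^ k) - -(b * (h * x2 ^ (h-1))) / (1 + b * x2 ^ h) ^ 2) := by
    rw [eq_div_iff h2C2.ne']
    linear_combination 2 * hEq2.symm - (2 * (k : ℝ) * deriv Γ x1) * hx2pow
  -- stationary relations
  have hg2rel : gHill b h x2 = x1 * (a + x1 ^ k) := by
    have h1 := hrel1
    simp only [fHill] at h1
    field_simp at h1
    linarith
  have hg1rel : gHill b h x1 = 2 * x2 * (a + x2 ^ k) - x1 * (a + x1 ^ k) := by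
    have h2 := hrel2
    simp only [fHill] at h2
    rw [hg2rel] at h2
    field_simp at h2
    linarith
  -- chain rule and assembly
  have hchain : deriv (γ ∘ Γ) x1 = deriv γ x2 * deriv Γ x1 := by
    rw [deriv_comp x1 (hΓval.symm ▸ hγdiff) hΓdiff, hΓval]
  have hp1 : x1 ^ (k-1) = x1 ^ k / x1 := by
    rw [eq_div_iff hx1.ne']; linear_combination hx1pow
  have hp2 : x2 ^ (k-1) = x2 ^ k / x2 := by
    rw [eq_div_iff hx2.ne']; linear_combination hx2pow
  rw [hchain, hγ', hΓ',
    (gHill_hasDerivAt b h x1 hB1.ne').deriv, (gHill_hasDerivAt b h x2 hB2.ne').deriv,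
    (fHill_hasDerivAt a k x1 hA1.ne').deriv, (fHill_hasDerivAt a k x2 hA2.ne').deriv,
    hg1rel, hg2rel]
  simp only [fHill]
  rw [hp1, hp2]
  have hdenA : 1 - -((k:ℝ) * (x1 ^ k / x1)) / (a + x1 ^ k) ^ 2 * (x1 * (a + x1 ^ k))
      = (a + x1 ^ k + k * x1 ^ k) / (a + x1 ^ k) := by
    field_simp
    ring
  have hdenB : 2 - (-((k:ℝ) * (x2 ^ k / x2)) / (a + x2 ^ k) ^ 2 * (x1 * (a + x1 ^ k))
        + 1 / (a + x2 ^ k) * (-(b * (h * x2 ^ (h-1))) / (1 + b * x2 ^ h) ^ 2))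
      - (2 * x2 * (a + x2 ^ k) - x1 * (a + x1 ^ k)) * (-((k:ℝ) * (x2 ^ k / x2)) / (a + x2 ^ k) ^ 2)
      = (2 * (a + x2 ^ k + k * x2 ^ k) - -(b * (h * x2 ^ (h-1))) / (1 + b * x2 ^ h) ^ 2)
        / (a + x2 ^ k) := by
    field_simp
    ring
  rw [hdenA, hdenB]
  field_simp
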